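/- Consider the exact DPP iteration with parameter η > 0 started from Ψ_0 with ‖Ψ_0‖ ≤ V_max, and define the auxiliary action-value functions by Q_0 = Ψ_0 and Q_k = ((k−1)/k) T^{π_{k−1}} Q_{k−1} + (1/k) T^{π_{k−1}} Q_0 for k ≥ 1, where π_k is the soft-max policy associated with Ψ_k. Then for every integer k ≥ 1: ‖Q* − Q_k‖ ≤ γ(4 V_max + log(L)/η) / ((1−γ) k). -/

import Mathlib

open Finset Real Filter

variable {X A : Type*}

/-- `(πQ)(x) = Σ_a π(a|x) Q(x,a)`. -/
noncomputable def polApply [Fintype A] (pol : X → A → ℝ) (Q : X → A → ℝ) : X → ℝ :=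
  fun x => ∑ a, pol x a * Q x a

/-- Bellman operator `T^π`. -/
noncomputable def bellman [Fintype X] [Fintype A]
    (P : X → A → X → ℝ) (r : X → A → ℝ) (γ : ℝ) (pol : X → A → ℝ)
    (Q : X → A → ℝ) : X → A → ℝ :=
  fun x a => r x a + γ * ∑ x', ∑ a', P x a x' * pol x' a' * Q x' a'

/-- Bellman optimality operator `T`. -/
noncomputable def bellmanOpt [Fintype X] [Fintype A] [Nonempty A]
    (P : X → A → X → ℝ) (r : X → A → ℝ) (γ : ℝ) (Q : X → A → ℝ) : X → A → ℝ :=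
  fun x a => r x a + γ * ∑ x', P x a x' * (Finset.univ.sup' Finset.univ_nonempty (Q x'))

/-- Soft-max policy associated with action preferences `Ψ` at inverse temperature `η`. -/
noncomputable def softmaxPol [Fintype A] (η : ℝ) (Ψ : X → A → ℝ) : X → A → ℝ :=
  fun x a => Real.exp (η * Ψ x a) / ∑ a', Real.exp (η * Ψ x a')

/-- Supremum norm over state-action pairs. -/
noncomputable def supNorm [Fintype X] [Fintype A] [Nonempty X] [Nonempty A]
    (Q : X → A → ℝ) : ℝ :=
  Finset.univ.sup' Finset.univ_nonempty (fun p : X × A => |Q p.1 p.2|)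

set_option linter.unusedSectionVars false
set_option linter.unusedVariables false
set_option maxHeartbeats 1000000

section helpers
variable {X A : Type*} [Fintype X] [Fintype A] [Nonempty X] [Nonempty A]

lemma abs_le_supNorm (Q : X → A → ℝ) (x : X) (a : A) : |Q x a| ≤ supNorm Q :=
  Finset.le_sup' (fun p : X × A => |Q p.1 p.2|) (Finset.mem_univ (x, a))

lemma supNorm_le {Q : X → A → ℝ} {c : ℝ} (h : ∀ x a, |Q x a| ≤ c) : supNorm Q ≤ c :=
  Finset.sup'_le _ _ fun p _ => h p.1 p.2

lemma supNorm_nonneg (Q : X → A → ℝ) : 0 ≤ supNorm Q :=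
  le_trans (abs_nonneg _) (abs_le_supNorm Q (Classical.arbitrary X) (Classical.arbitrary A))

lemma sup'_add_const (f : A → ℝ) (c : ℝ) :
    Finset.univ.sup' Finset.univ_nonempty (fun a => f a + c)
      = Finset.univ.sup' Finset.univ_nonempty f + c := by
  have := Finset.comp_sup'_eq_sup'_comp (s := (Finset.univ : Finset A))
    Finset.univ_nonempty (f := f) (g := fun y => y + c) (fun x y => (max_add_add_right x y c).symm)
  simpa [Function.comp] using this.symm

lemma sup'_const_mul (f : A → ℝ) {c : ℝ} (hc : 0 ≤ c) :
    Finset.univ.sup' Finset.univ_nonempty (fun a => c * f a)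
      = c * Finset.univ.sup' Finset.univ_nonempty f := by
  have := Finset.comp_sup'_eq_sup'_comp (s := (Finset.univ : Finset A))
    Finset.univ_nonempty (f := f) (g := fun y => c * y) (fun x y => mul_max_of_nonneg x y hc)
  simpa [Function.comp] using this.symm

lemma abs_sup'_sub_sup'_le {f g : A → ℝ} {c : ℝ} (h : ∀ a, |f a - g a| ≤ c) :
    |Finset.univ.sup' Finset.univ_nonempty f - Finset.univ.sup' Finset.univ_nonempty g| ≤ c := by
  obtain ⟨a, -, ha⟩ := Finset.exists_mem_eq_sup' (Finset.univ_nonempty (α := A)) f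
  obtain ⟨b, -, hb⟩ := Finset.exists_mem_eq_sup' (Finset.univ_nonempty (α := A)) g
  rw [abs_le]
  constructor
  · have h1 : g b - f b ≤ c := by have := h b; rw [abs_le] at this; linarith [this.1]
    have h2 : f b ≤ Finset.univ.sup' Finset.univ_nonempty f := Finset.le_sup' f (Finset.mem_univ b)
    rw [hb]; linarith
  · have h1 : f a - g a ≤ c := (abs_le.mp (h a)).2
    have h2 : g a ≤ Finset.univ.sup' Finset.univ_nonempty g := Finset.le_sup' g (Finset.mem_univ a)
    rw [ha]; linarith

lemma abs_sum_P_le {P : X → ℝ} (hP0 : ∀ x', 0 ≤ P x') (hP1 : ∑ x', P x' = 1)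
    {h : X → ℝ} {c : ℝ} (hc : ∀ x', |h x'| ≤ c) : |∑ x', P x' * h x'| ≤ c := by
  calc |∑ x', P x' * h x'| ≤ ∑ x', |P x' * h x'| := Finset.abs_sum_le_sum_abs _ _
    _ = ∑ x', P x' * |h x'| := by
        refine Finset.sum_congr rfl fun x' _ => ?_
        rw [abs_mul, abs_of_nonneg (hP0 x')]
    _ ≤ ∑ x', P x' * c := Finset.sum_le_sum fun x' _ => mul_le_mul_of_nonneg_left (hc x') (hP0 x')
    _ = c := by rw [← Finset.sum_mul, hP1, one_mul]

end helpers

lemma bellman_apply {X A : Type*} [Fintype X] [Fintype A] (P : X → A → X → ℝ) (r : X → A → ℝ) (γ : ℝ) (pol : X → A → ℝ)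
    (Q : X → A → ℝ) (x : X) (a : A) :
    bellman P r γ pol Q x a = r x a + γ * ∑ x', P x a x' * ∑ a', pol x' a' * Q x' a' := by
  simp only [bellman]
  congr 2
  refine Finset.sum_congr rfl fun x' _ => ?_
  rw [Finset.mul_sum]
  exact Finset.sum_congr rfl fun a' _ => by ring

section sm
variable {X A : Type*} [Fintype A] [Nonempty A]

lemma Z_pos (η : ℝ) (Ψ : X → A → ℝ) (x : X) : 0 < ∑ a', Real.exp (η * Ψ x a') :=
  Finset.sum_pos (fun a _ => Real.exp_pos _) Finset.univ_nonempty

lemma softmax_pos (η : ℝ) (Ψ : X → A → ℝ) (x : X) (a : A) : 0 < softmaxPol η Ψ x a :=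
  div_pos (Real.exp_pos _) (Z_pos η Ψ x)

lemma softmax_sum_one (η : ℝ) (Ψ : X → A → ℝ) (x : X) : ∑ a, softmaxPol η Ψ x a = 1 := by
  simp only [softmaxPol]
  rw [← Finset.sum_div, div_self (Z_pos η Ψ x).ne']

lemma softmax_val_le (η : ℝ) (Ψ : X → A → ℝ) (x : X) :
    ∑ a, softmaxPol η Ψ x a * Ψ x a ≤ Finset.univ.sup' Finset.univ_nonempty (Ψ x) := by
  calc ∑ a, softmaxPol η Ψ x a * Ψ x a
      ≤ ∑ a, softmaxPol η Ψ x a * Finset.univ.sup' Finset.univ_nonempty (Ψ x) :=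
        Finset.sum_le_sum fun a _ => mul_le_mul_of_nonneg_left
          (Finset.le_sup' (Ψ x) (Finset.mem_univ a)) (softmax_pos η Ψ x a).le
    _ = _ := by rw [← Finset.sum_mul, softmax_sum_one, one_mul]

lemma le_softmax_val {η : ℝ} (hη : 0 < η) (Ψ : X → A → ℝ) (x : X) :
    Finset.univ.sup' Finset.univ_nonempty (Ψ x) - Real.log (Fintype.card A) / η
      ≤ ∑ a, softmaxPol η Ψ x a * Ψ x a := by
  set M := Finset.univ.sup' Finset.univ_nonempty (Ψ x) with hM
  set Z := ∑ a', Real.exp (η * Ψ x a') with hZ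
  have hZpos : 0 < Z := Z_pos η Ψ x
  set L : ℝ := (Fintype.card A : ℝ) with hL
  have hLpos : 0 < L := by
    simp only [hL]; exact_mod_cast Fintype.card_pos
  have key : ∑ a, softmaxPol η Ψ x a * (M - Ψ x a) ≤ Real.log L / η := by
    have hexpM : Real.exp (η * M) ≤ Z := by
      obtain ⟨a0, -, ha0⟩ := Finset.exists_mem_eq_sup' (Finset.univ_nonempty (α := A)) (Ψ x)
      rw [← hM] at ha0
      calc Real.exp (η * M) = Real.exp (η * Ψ x a0) := by rw [ha0]
        _ ≤ Z := Finset.single_le_sum (f := fun a => Real.exp (η * Ψ x a))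
            (fun a _ => (Real.exp_pos _).le) (Finset.mem_univ a0)
    have step : ∀ a, softmaxPol η Ψ x a * (M - Ψ x a)
        ≤ softmaxPol η Ψ x a * (Real.log L + Real.log (Real.exp (η * M)) - Real.log Z) / η
          + (1 / L - softmaxPol η Ψ x a) / η := by
      intro a
      have hpa := softmax_pos η Ψ x a
      have hta : (0:ℝ) < Real.exp (η * Ψ x a) := Real.exp_pos _
      have hy : (0:ℝ) < Z / (L * Real.exp (η * Ψ x a)) := by positivity
      have hlog := Real.log_le_sub_one_of_pos hy
      have hylog : Real.log (Z / (L * Real.exp (η * Ψ x a)))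
          = Real.log Z - Real.log L - η * Ψ x a := by
        rw [Real.log_div hZpos.ne' (by positivity), Real.log_mul hLpos.ne' hta.ne',
          Real.log_exp]; ring
      have h1 : η * (M - Ψ x a)
          = (Real.log L + Real.log (Real.exp (η * M)) - Real.log Z)
            + Real.log (Z / (L * Real.exp (η * Ψ x a))) := by
        rw [Real.log_exp, hylog]; ring
      have h3 : softmaxPol η Ψ x a * (Z / (L * Real.exp (η * Ψ x a))) = 1 / L := by
        simp only [softmaxPol, ← hZ]; field_simp
      have h4 : softmaxPol η Ψ x a * (η * (M - Ψ x a))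
          ≤ softmaxPol η Ψ x a * (Real.log L + Real.log (Real.exp (η * M)) - Real.log Z)
            + (1 / L - softmaxPol η Ψ x a) := by
        rw [h1, mul_add]
        have := mul_le_mul_of_nonneg_left hlog hpa.le
        rw [mul_sub, h3, mul_one] at this
        linarith
      have h6 := (div_le_div_iff_of_pos_right hη).mpr h4
      rw [add_div] at h6
      calc softmaxPol η Ψ x a * (M - Ψ x a)
          = softmaxPol η Ψ x a * (η * (M - Ψ x a)) / η := by field_simp
        _ ≤ _ := h6
    calc ∑ a, softmaxPol η Ψ x a * (M - Ψ x a)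
        ≤ ∑ a, (softmaxPol η Ψ x a * (Real.log L + Real.log (Real.exp (η * M)) - Real.log Z) / η
            + (1 / L - softmaxPol η Ψ x a) / η) := Finset.sum_le_sum fun a _ => step a
      _ = (Real.log L + Real.log (Real.exp (η * M)) - Real.log Z) / η := by
          rw [Finset.sum_add_distrib, ← Finset.sum_div, ← Finset.sum_div,
            ← Finset.sum_mul, softmax_sum_one, one_mul, Finset.sum_sub_distrib,
            Finset.sum_const, softmax_sum_one]
          have hcard : (Finset.univ (α := A)).card • (1 / L) = (1:ℝ) := by
            rw [nsmul_eq_mul, Finset.card_univ, hL]; field_simp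
          rw [hcard]; ring
      _ ≤ Real.log L / η := by
          have h6 : Real.log (Real.exp (η * M)) - Real.log Z ≤ 0 := by
            have := Real.log_le_log (Real.exp_pos _) hexpM
            linarith
          exact (div_le_div_iff_of_pos_right hη).mpr (by linarith)
  have expand : ∑ a, softmaxPol η Ψ x a * (M - Ψ x a)
      = M - ∑ a, softmaxPol η Ψ x a * Ψ x a := by
    rw [Finset.sum_congr rfl (fun a _ => mul_sub (softmaxPol η Ψ x a) M (Ψ x a)),
      Finset.sum_sub_distrib, ← Finset.sum_mul, softmax_sum_one, one_mul]
  rw [expand] at key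
  linarith
end sm

/-- The DPP identity: `k·Q_k + Q_0 = Ψ_k + g_k` with `g_k` a state function satisfying
`k·Q_k = k·r + γ P g_k`, where `g_0 = 0` and `g_{k+1} = π_k Ψ_k + g_k`. -/
lemma dpp_identity {X A : Type*} [Fintype X] [Fintype A] [Nonempty A]
    (P : X → A → X → ℝ) (r : X → A → ℝ) (γ : ℝ)
    (Ψ : ℕ → X → A → ℝ) (pol : ℕ → X → A → ℝ)
    (hpolsum : ∀ k x, ∑ a, pol k x a = 1)
    (hΨ : ∀ k x a, Ψ (k + 1) x a =
      Ψ k x a + bellman P r γ (pol k) (Ψ k) x a - polApply (pol k) (Ψ k) x)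
    (Q : ℕ → X → A → ℝ) (hQ0 : Q 0 = Ψ 0)
    (hQ : ∀ k : ℕ, ∀ x a, Q (k + 1) x a =
      ((k : ℝ) / (k + 1)) * bellman P r γ (pol k) (Q k) x a +
        (1 / ((k : ℝ) + 1)) * bellman P r γ (pol k) (Q 0) x a)
    (g : ℕ → X → ℝ) (hg0 : g 0 = fun _ => 0)
    (hgrec : ∀ k, g (k + 1) = fun x => polApply (pol k) (Ψ k) x + g k x) :
    ∀ k : ℕ,
      (∀ x a, (k : ℝ) * Q k x a + Q 0 x a = Ψ k x a + g k x) ∧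
      (∀ x a, (k : ℝ) * Q k x a = (k : ℝ) * r x a + γ * ∑ x', P x a x' * g k x') := by
  intro k
  induction k with
  | zero =>
    constructor
    · intro x a; simp [hQ0, hg0]
    · intro x a; simp [hg0]
  | succ k ih =>
    obtain ⟨h1, h2⟩ := ih
    have keyQ : ∀ x a, ((k:ℝ)+1) * Q (k+1) x a
        = ((k:ℝ)+1) * r x a
          + γ * ∑ x', P x a x' * (polApply (pol k) (Ψ k) x' + g k x') := by
      intro x a
      have hk1 : ((k:ℝ)+1) ≠ 0 := by positivity
      have e1 : ((k:ℝ)+1) * Q (k+1) x a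
          = (k:ℝ) * bellman P r γ (pol k) (Q k) x a + bellman P r γ (pol k) (Q 0) x a := by
        rw [hQ k x a]; field_simp
      rw [e1, bellman_apply, bellman_apply]
      have e2 : ∀ x', polApply (pol k) (Ψ k) x' + g k x'
          = (k:ℝ) * (∑ a', pol k x' a' * Q k x' a') + (∑ a', pol k x' a' * Q 0 x' a') := by
        intro x'
        have e2a : ∀ a', (k:ℝ) * (pol k x' a' * Q k x' a') + pol k x' a' * Q 0 x' a'
            = pol k x' a' * Ψ k x' a' + pol k x' a' * g k x' := by
          intro a'
          calc (k:ℝ) * (pol k x' a' * Q k x' a') + pol k x' a' * Q 0 x' a'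
              = pol k x' a' * ((k:ℝ) * Q k x' a' + Q 0 x' a') := by ring
            _ = pol k x' a' * (Ψ k x' a' + g k x') := by rw [h1 x' a']
            _ = _ := by ring
        calc polApply (pol k) (Ψ k) x' + g k x'
            = (∑ a', pol k x' a' * Ψ k x' a') + (∑ a', pol k x' a') * g k x' := by
              rw [hpolsum, one_mul, polApply]
          _ = ∑ a', (pol k x' a' * Ψ k x' a' + pol k x' a' * g k x') := by
              rw [Finset.sum_add_distrib, Finset.sum_mul]
          _ = ∑ a', ((k:ℝ) * (pol k x' a' * Q k x' a') + pol k x' a' * Q 0 x' a') :=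
              (Finset.sum_congr rfl fun a' _ => (e2a a').symm)
          _ = (k:ℝ) * (∑ a', pol k x' a' * Q k x' a') + (∑ a', pol k x' a' * Q 0 x' a') := by
              rw [Finset.sum_add_distrib, ← Finset.mul_sum]
      have e3 : ∑ x', P x a x' * (polApply (pol k) (Ψ k) x' + g k x')
          = (k:ℝ) * (∑ x', P x a x' * ∑ a', pol k x' a' * Q k x' a')
            + ∑ x', P x a x' * ∑ a', pol k x' a' * Q 0 x' a' := by
        rw [Finset.mul_sum, ← Finset.sum_add_distrib]
        refine Finset.sum_congr rfl fun x' _ => ?_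
        rw [e2 x']; ring
      rw [e3]; ring
    constructor
    · intro x a
      push_cast
      rw [keyQ x a, hΨ k x a, bellman_apply, hgrec k]
      have split : ∑ x', P x a x' * (polApply (pol k) (Ψ k) x' + g k x')
          = (∑ x', P x a x' * polApply (pol k) (Ψ k) x') + ∑ x', P x a x' * g k x' := by
        rw [← Finset.sum_add_distrib]
        exact Finset.sum_congr rfl fun x' _ => by ring
      rw [split]
      have h1' := h1 x a
      have h2' := h2 x a
      simp only [polApply] at *
      linarith
    · intro x a
      push_cast
      rw [keyQ x a, hgrec k]



/-- Lemma 2 of the paper: `ℓ∞`-norm bound on `Q* − Q_k` for the exact DPP auxiliary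
action-value functions. -/
theorem dpp_auxiliary_error_bound
    {X A : Type*} [Fintype X] [Fintype A] [Nonempty X] [Nonempty A]
    (P : X → A → X → ℝ) (hP0 : ∀ x a x', 0 ≤ P x a x') (hP1 : ∀ x a, ∑ x', P x a x' = 1)
    (r : X → A → ℝ) (Rmax : ℝ) (hR : 0 < Rmax) (hr : ∀ x a, |r x a| ≤ Rmax)
    (γ : ℝ) (hγ0 : 0 ≤ γ) (hγ1 : γ < 1)
    (Vmax : ℝ) (hV : Vmax = Rmax / (1 - γ))
    (η : ℝ) (hη : 0 < η)
    (Ψ : ℕ → X → A → ℝ) (hΨ0 : supNorm (Ψ 0) ≤ Vmax)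
    (pol : ℕ → X → A → ℝ) (hpol : ∀ k, pol k = softmaxPol η (Ψ k))
    (hΨ : ∀ k x a, Ψ (k + 1) x a =
      Ψ k x a + bellman P r γ (pol k) (Ψ k) x a - polApply (pol k) (Ψ k) x)
    (Qstar : X → A → ℝ) (hQstar : bellmanOpt P r γ Qstar = Qstar)
    (Q : ℕ → X → A → ℝ) (hQ0 : Q 0 = Ψ 0)
    (hQ : ∀ k : ℕ, ∀ x a, Q (k + 1) x a =
      ((k : ℝ) / (k + 1)) * bellman P r γ (pol k) (Q k) x a +
        (1 / ((k : ℝ) + 1)) * bellman P r γ (pol k) (Q 0) x a) :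
    ∀ k : ℕ, supNorm (fun x a => Qstar x a - Q (k + 1) x a) ≤
      γ * (4 * Vmax + Real.log (Fintype.card A) / η) /
        ((1 - γ) * ((k : ℝ) + 1)) := by
  have hγ' : (0:ℝ) < 1 - γ := by linarith
  have hl : 0 ≤ Real.log (Fintype.card A) / η :=
    div_nonneg (Real.log_nonneg (by exact_mod_cast Fintype.card_pos (α := A))) hη.le
  have polsum : ∀ k x, ∑ a, pol k x a = 1 := fun k x => by
    rw [hpol k]; exact softmax_sum_one η (Ψ k) x
  -- the state functions g_k
  set g : ℕ → X → ℝ :=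
    fun k => Nat.rec (fun _ => (0:ℝ)) (fun k gk x => polApply (pol k) (Ψ k) x + gk x) k with hg
  have hg0 : g 0 = fun _ => 0 := rfl
  have hgrec : ∀ k, g (k + 1) = fun x => polApply (pol k) (Ψ k) x + g k x := fun k => rfl
  have idk := dpp_identity P r γ Ψ pol polsum hΨ Q hQ0 hQ g hg0 hgrec
  -- fixed point equation for Q*
  have hQfix : ∀ x a, Qstar x a
      = r x a + γ * ∑ x', P x a x' * (Finset.univ.sup' Finset.univ_nonempty (Qstar x')) := by
    intro x a
    conv_lhs => rw [← hQstar]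
    rfl
  -- ‖Q*‖ ≤ Vmax
  have habsM : ∀ x', |Finset.univ.sup' Finset.univ_nonempty (Qstar x')| ≤ supNorm Qstar := by
    intro x'
    obtain ⟨a0, -, ha0⟩ := Finset.exists_mem_eq_sup' (Finset.univ_nonempty (α := A)) (Qstar x')
    rw [ha0]; exact abs_le_supNorm Qstar x' a0
  have hQsnorm : supNorm Qstar ≤ Vmax := by
    have hb : supNorm Qstar ≤ Rmax + γ * supNorm Qstar := by
      apply supNorm_le
      intro x a
      rw [hQfix x a]
      have hsum := abs_sum_P_le (hP0 x a) (hP1 x a) habsM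
      calc |r x a + γ * ∑ x', P x a x' * (Finset.univ.sup' Finset.univ_nonempty (Qstar x'))|
          ≤ |r x a| + |γ * ∑ x', P x a x' * (Finset.univ.sup' Finset.univ_nonempty (Qstar x'))| :=
            abs_add_le _ _
        _ ≤ Rmax + γ * supNorm Qstar := by
            rw [abs_mul, abs_of_nonneg hγ0]
            exact add_le_add (hr x a) (mul_le_mul_of_nonneg_left hsum hγ0)
    rw [hV, le_div_iff₀ hγ']
    nlinarith
  -- main pointwise bound
  have main : ∀ (k:ℕ) (x : X) (a : A), |((k:ℝ)+1) * (Qstar x a - Q (k+1) x a)|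
      ≤ γ * (supNorm (fun x a => ((k:ℝ)+1) * Qstar x a - ((k:ℝ) * Q k x a + Q 0 x a))
          + Real.log (Fintype.card A) / η) := by
    intro k x a
    obtain ⟨h1, -⟩ := idk k
    obtain ⟨-, h2'⟩ := idk (k+1)
    have eQ : ((k:ℝ)+1) * Q (k+1) x a
        = ((k:ℝ)+1) * r x a + γ * ∑ x', P x a x' * g (k+1) x' := by
      have := h2' x a; push_cast at this; exact this
    have eS : ((k:ℝ)+1) * Qstar x a = ((k:ℝ)+1) * r x a
        + γ * ∑ x', P x a x' * (((k:ℝ)+1) * Finset.univ.sup' Finset.univ_nonempty (Qstar x')) := by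
      rw [hQfix x a]
      have e : ∑ x', P x a x' * (((k:ℝ)+1) * Finset.univ.sup' Finset.univ_nonempty (Qstar x'))
          = ((k:ℝ)+1) * ∑ x', P x a x' * Finset.univ.sup' Finset.univ_nonempty (Qstar x') := by
        rw [Finset.mul_sum]; exact Finset.sum_congr rfl fun x' _ => by ring
      rw [e]; ring
    have comb : (∑ x', P x a x' * (((k:ℝ)+1) * Finset.univ.sup' Finset.univ_nonempty (Qstar x')))
          - ∑ x', P x a x' * g (k+1) x'
        = ∑ x', P x a x' * (((k:ℝ)+1) * Finset.univ.sup' Finset.univ_nonempty (Qstar x')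
            - g (k+1) x') := by
      rw [← Finset.sum_sub_distrib]; exact Finset.sum_congr rfl fun x' _ => by ring
    have ediff : ((k:ℝ)+1) * (Qstar x a - Q (k+1) x a)
        = γ * ∑ x', P x a x' * (((k:ℝ)+1) * Finset.univ.sup' Finset.univ_nonempty (Qstar x')
            - g (k+1) x') := by
      linear_combination eS - eQ + γ * comb
    rw [ediff, abs_mul, abs_of_nonneg hγ0]
    refine mul_le_mul_of_nonneg_left ?_ hγ0
    refine abs_sum_P_le (hP0 x a) (hP1 x a) ?_
    intro x'
    have hgk1 : g (k+1) x' = (∑ a', softmaxPol η (Ψ k) x' a' * Ψ k x' a') + g k x' := by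
      rw [hgrec k]; simp only [polApply, hpol k]
    have hMF : Finset.univ.sup' Finset.univ_nonempty (fun a' => (k:ℝ) * Q k x' a' + Q 0 x' a')
        = Finset.univ.sup' Finset.univ_nonempty (Ψ k x') + g k x' := by
      have e : (fun a' => (k:ℝ) * Q k x' a' + Q 0 x' a') = fun a' => Ψ k x' a' + g k x' :=
        funext fun a' => h1 x' a'
      rw [e, sup'_add_const]
    have hscale : Finset.univ.sup' Finset.univ_nonempty (fun a' => ((k:ℝ)+1) * Qstar x' a')
        = ((k:ℝ)+1) * Finset.univ.sup' Finset.univ_nonempty (Qstar x') :=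
      sup'_const_mul (Qstar x') (by positivity)
    have hDb : |((k:ℝ)+1) * Finset.univ.sup' Finset.univ_nonempty (Qstar x')
        - Finset.univ.sup' Finset.univ_nonempty (fun a' => (k:ℝ) * Q k x' a' + Q 0 x' a')|
        ≤ supNorm (fun x a => ((k:ℝ)+1) * Qstar x a - ((k:ℝ) * Q k x a + Q 0 x a)) := by
      rw [← hscale]
      exact abs_sup'_sub_sup'_le fun a' =>
        abs_le_supNorm (fun x a => ((k:ℝ)+1) * Qstar x a - ((k:ℝ) * Q k x a + Q 0 x a)) x' a'
    have hsm1 := softmax_val_le η (Ψ k) x'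
    have hsm2 := le_softmax_val hη (Ψ k) x'
    rw [hMF] at hDb
    rw [abs_le] at hDb ⊢
    rw [hgk1]
    constructor
    · linarith [hDb.1, hsm1]
    · linarith [hDb.2, hsm2]
  -- the induction invariant
  have inv : ∀ k : ℕ, (k:ℝ) * supNorm (fun x a => Qstar x a - Q k x a)
      ≤ γ * (supNorm (fun x a => Qstar x a - Q 0 x a) + Real.log (Fintype.card A) / η)
        / (1 - γ) := by
    intro k
    induction k with
    | zero =>
      simp only [Nat.cast_zero, zero_mul]
      have hc0 : 0 ≤ supNorm (fun x a => Qstar x a - Q 0 x a) + Real.log (Fintype.card A) / η :=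
        add_nonneg (supNorm_nonneg _) hl
      positivity
    | succ k ih =>
      have hk1 : (0:ℝ) < (k:ℝ) + 1 := by positivity
      have hDle : supNorm (fun x a => ((k:ℝ)+1) * Qstar x a - ((k:ℝ) * Q k x a + Q 0 x a))
          ≤ (k:ℝ) * supNorm (fun x a => Qstar x a - Q k x a)
            + supNorm (fun x a => Qstar x a - Q 0 x a) := by
        apply supNorm_le
        intro x a
        have e : ((k:ℝ)+1) * Qstar x a - ((k:ℝ) * Q k x a + Q 0 x a)
            = (k:ℝ) * (Qstar x a - Q k x a) + (Qstar x a - Q 0 x a) := by ring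
        rw [e]
        calc |(k:ℝ) * (Qstar x a - Q k x a) + (Qstar x a - Q 0 x a)|
            ≤ |(k:ℝ) * (Qstar x a - Q k x a)| + |Qstar x a - Q 0 x a| := abs_add_le _ _
          _ = (k:ℝ) * |Qstar x a - Q k x a| + |Qstar x a - Q 0 x a| := by
              rw [abs_mul, abs_of_nonneg (Nat.cast_nonneg k)]
          _ ≤ _ := add_le_add
              (mul_le_mul_of_nonneg_left
                (abs_le_supNorm (fun x a => Qstar x a - Q k x a) x a) (Nat.cast_nonneg k))
              (abs_le_supNorm (fun x a => Qstar x a - Q 0 x a) x a)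
      have hstep : ((k:ℝ)+1) * supNorm (fun x a => Qstar x a - Q (k+1) x a)
          ≤ γ * (supNorm (fun x a => ((k:ℝ)+1) * Qstar x a - ((k:ℝ) * Q k x a + Q 0 x a))
              + Real.log (Fintype.card A) / η) := by
        rw [mul_comm, ← le_div_iff₀ hk1]
        apply supNorm_le
        intro x a
        have hm := main k x a
        rw [abs_mul, abs_of_pos hk1] at hm
        rw [le_div_iff₀ hk1]
        calc |Qstar x a - Q (k+1) x a| * ((k:ℝ)+1)
            = ((k:ℝ)+1) * |Qstar x a - Q (k+1) x a| := mul_comm _ _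
          _ ≤ _ := hm
      push_cast
      have hA : γ * (supNorm (fun x a => ((k:ℝ)+1) * Qstar x a - ((k:ℝ) * Q k x a + Q 0 x a))
            + Real.log (Fintype.card A) / η)
          ≤ γ * ((k:ℝ) * supNorm (fun x a => Qstar x a - Q k x a)
            + (supNorm (fun x a => Qstar x a - Q 0 x a) + Real.log (Fintype.card A) / η)) :=
        mul_le_mul_of_nonneg_left (by linarith) hγ0
      have hC : γ * ((k:ℝ) * supNorm (fun x a => Qstar x a - Q k x a))
          ≤ γ * (γ * (supNorm (fun x a => Qstar x a - Q 0 x a)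
              + Real.log (Fintype.card A) / η) / (1 - γ)) :=
        mul_le_mul_of_nonneg_left ih hγ0
      have hid : γ * (γ * (supNorm (fun x a => Qstar x a - Q 0 x a)
              + Real.log (Fintype.card A) / η) / (1 - γ))
          + γ * (supNorm (fun x a => Qstar x a - Q 0 x a) + Real.log (Fintype.card A) / η)
          = γ * (supNorm (fun x a => Qstar x a - Q 0 x a) + Real.log (Fintype.card A) / η)
            / (1 - γ) := by
        field_simp
        ring
      nlinarith [hstep, hA, hC]
  -- conclusion
  intro k
  have hVpos : 0 < Vmax := by rw [hV]; exact div_pos hR hγ'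
  have hQ0norm : supNorm (Q 0) ≤ Vmax := by rw [hQ0]; exact hΨ0
  have he0 : supNorm (fun x a => Qstar x a - Q 0 x a) ≤ 2 * Vmax := by
    apply supNorm_le
    intro x a
    calc |Qstar x a - Q 0 x a| ≤ |Qstar x a| + |Q 0 x a| := abs_sub _ _
      _ ≤ Vmax + Vmax := add_le_add
          ((abs_le_supNorm Qstar x a).trans hQsnorm)
          ((abs_le_supNorm (Q 0) x a).trans hQ0norm)
      _ = 2 * Vmax := by ring
  have hinv := inv (k+1)
  push_cast at hinv
  have hk1 : (0:ℝ) < (k:ℝ) + 1 := by positivity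
  have step1 : supNorm (fun x a => Qstar x a - Q (k+1) x a)
      ≤ γ * (supNorm (fun x a => Qstar x a - Q 0 x a) + Real.log (Fintype.card A) / η)
        / ((1 - γ) * ((k:ℝ)+1)) := by
    rw [le_div_iff₀ (by positivity)]
    have := (le_div_iff₀ hγ').mp hinv
    calc supNorm (fun x a => Qstar x a - Q (k+1) x a) * ((1 - γ) * ((k:ℝ)+1))
        = (((k:ℝ)+1) * supNorm (fun x a => Qstar x a - Q (k+1) x a)) * (1 - γ) := by ring
      _ ≤ _ := this
  refine step1.trans ?_
  apply div_le_div_of_nonneg_right ?_ (by positivity)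
  · apply mul_le_mul_of_nonneg_left ?_ hγ0
    linarith
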